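/- Let n ≥ 1, let i be an integer, let ⋆ be a multiplicative Lie algebra structure on the dihedral group Dₙ satisfying a⋆b = bⁱ, let f be a normalized 2-cocycle on Dₙ with values in ℂˣ, and let h be a multiplicative Lie partner of f with respect to ⋆. Then for all integers j, k one has h(bʲ, a·bᵏ) = h(bʲ, a) and h(a·bᵏ, bʲ) = h(a, bʲ). -/

import Mathlib

/-- A multiplicative Lie algebra structure on a group `K` is a map `⋆ : K × K → K`
satisfying the five axioms below (writing `ˣy` for `x * y * x⁻¹`). -/
def IsMulLieStructure {K : Type*} [Group K] (star : K → K → K) : Prop :=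
  (∀ x : K, star x x = 1) ∧
  (∀ x y z : K, star x (y * z) = star x y * (y * star x z * y⁻¹)) ∧
  (∀ x y z : K, star (x * y) z = (x * star y z * x⁻¹) * star x z) ∧
  (∀ x y z : K,
    star (star x y) (y * z * y⁻¹) * star (star y z) (z * x * z⁻¹) *
      star (star z x) (x * y * x⁻¹) = 1) ∧
  (∀ x y z : K, z * star x y * z⁻¹ = star (z * x * z⁻¹) (z * y * z⁻¹))

/-- A normalized 2-cocycle on a group `K` with values in `ℂˣ` (trivial action). -/
def IsNormalizedCocycle {K : Type*} [Group K] (f : K → K → ℂˣ) : Prop :=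
  (∀ x y z : K, f x y * f (x * y) z = f y z * f x (y * z)) ∧
  (∀ x : K, f x 1 = 1 ∧ f 1 x = 1)

/-- `h` is a multiplicative Lie partner of the 2-cocycle `f` with respect to the
multiplicative Lie algebra structure `star` on `K`. -/
def IsMulLiePartner {K : Type*} [Group K] (star : K → K → K)
    (f h : K → K → ℂˣ) : Prop :=
  (∀ x : K, h x 1 = 1 ∧ h 1 x = 1 ∧ h x x = 1) ∧
  (∀ x y z : K, h x (y * z) =
    h x y * h x z * (f y⁻¹ y)⁻¹ * f y (star x z) * f (y * star x z) y⁻¹ *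
      f (star x y) (y * star x z * y⁻¹)) ∧
  (∀ x y z : K, h (x * y) z =
    h y z * h x z * (f x⁻¹ x)⁻¹ * f x (star y z) * f (x * star y z) x⁻¹ *
      f (x * star y z * x⁻¹) (star x z)) ∧
  (∀ x y z : K,
    h (star y x) (x * z * x⁻¹) * h (star x z) (z * y * z⁻¹) * h (star z y) (y * x * y⁻¹) *
      f (star (star y x) (x * z * x⁻¹)) (star (star x z) (z * y * z⁻¹)) *
      f (star (star y x) (x * z * x⁻¹) * star (star x z) (z * y * z⁻¹))
        (star (star z y) (y * x * y⁻¹)) = 1) ∧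
  (∀ x y z : K, h (z * x * z⁻¹) (z * y * z⁻¹) =
    h x y * f z (star x y) * (f z⁻¹ z)⁻¹ * f (z * star x y) z⁻¹)

/-- The reflection `a = sr 0` of the dihedral group `Dₙ`. -/
def Da (n : ℕ) : DihedralGroup n := DihedralGroup.sr 0

/-- The rotation `b = r 1` of the dihedral group `Dₙ`. -/
def Db (n : ℕ) : DihedralGroup n := DihedralGroup.r 1

theorem dihedral_partner_rotation_reflection (n : ℕ) (hn : 1 ≤ n) (i : ℤ)
    (star : DihedralGroup n → DihedralGroup n → DihedralGroup n)
    (hstar : IsMulLieStructure star)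
    (hab : star (Da n) (Db n) = (Db n) ^ i)
    (f h : DihedralGroup n → DihedralGroup n → ℂˣ)
    (hf : IsNormalizedCocycle f)
    (hh : IsMulLiePartner star f h) :
    ∀ j k : ℤ,
      h ((Db n) ^ j) (Da n * (Db n) ^ k) = h ((Db n) ^ j) (Da n) ∧
      h (Da n * (Db n) ^ k) ((Db n) ^ j) = h (Da n) ((Db n) ^ j) := by
  obtain ⟨s_self, s_right, s_left, -, -⟩ := hstar
  obtain ⟨cocy, fnorm⟩ := hf
  obtain ⟨hnorm, h_right, h_left, -, -⟩ := hh
  have f1 : ∀ x : DihedralGroup n, f x 1 = 1 := fun x => (fnorm x).1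
  have f1' : ∀ x : DihedralGroup n, f 1 x = 1 := fun x => (fnorm x).2
  have fsym : ∀ y : DihedralGroup n, f y y⁻¹ = f y⁻¹ y := by
    intro y
    have := cocy y y⁻¹ y
    simpa [f1, f1'] using this
  -- star basics
  have s_one_r : ∀ x : DihedralGroup n, star x 1 = 1 := by
    intro x
    have h2 := s_right x 1 1
    simp only [one_mul, mul_one, inv_one] at h2
    have h3 : star x 1 * 1 = star x 1 * star x 1 := by rw [mul_one]; exact h2
    exact (mul_left_cancel h3).symm
  have s_one_l : ∀ z : DihedralGroup n, star 1 z = 1 := by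
    intro z
    have h2 := s_left 1 1 z
    simp only [one_mul, mul_one, inv_one] at h2
    have h3 : star 1 z * 1 = star 1 z * star 1 z := by rw [mul_one]; exact h2
    exact (mul_left_cancel h3).symm
  have s_inv_r : ∀ x z : DihedralGroup n, star x z = 1 → star x z⁻¹ = 1 := by
    intro x z hs
    have h2 := s_right x z z⁻¹
    rw [mul_inv_cancel, s_one_r, hs, one_mul] at h2
    have h3 := congrArg (fun w => z⁻¹ * w * z) h2.symm
    simpa [mul_assoc] using h3
  have s_inv_l : ∀ x z : DihedralGroup n, star x z = 1 → star x⁻¹ z = 1 := by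
    intro x z hs
    have h2 := s_left x x⁻¹ z
    rw [mul_inv_cancel, s_one_l, hs, mul_one] at h2
    have h3 := congrArg (fun w => x⁻¹ * w * x) h2.symm
    simpa [mul_assoc] using h3
  -- star vanishes on rotations
  have sb1 : ∀ k : ℤ, star (Db n) (Db n ^ k) = 1 := by
    intro k
    induction k using Int.induction_on with
    | zero => simpa using s_one_r (Db n)
    | succ k ih =>
        have h2 := s_right (Db n) (Db n ^ (k : ℤ)) (Db n)
        rw [ih, s_self, one_mul, mul_one, mul_inv_cancel] at h2
        rw [zpow_add_one]
        exact h2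
    | pred k ih =>
        have h2 := s_right (Db n) (Db n ^ (-k : ℤ)) (Db n)⁻¹
        rw [ih, s_inv_r _ _ (s_self (Db n)), one_mul, mul_one, mul_inv_cancel] at h2
        rw [zpow_sub_one]
        exact h2
  have sbb : ∀ j k : ℤ, star (Db n ^ j) (Db n ^ k) = 1 := by
    intro j k
    induction j using Int.induction_on with
    | zero => simpa using s_one_l (Db n ^ k)
    | succ j ih =>
        have h2 := s_left (Db n ^ (j : ℤ)) (Db n) (Db n ^ k)
        rw [ih, sb1] at h2
        rw [zpow_add_one]
        simpa using h2
    | pred j ih =>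
        have h2 := s_left (Db n ^ (-j : ℤ)) (Db n)⁻¹ (Db n ^ k)
        rw [ih, s_inv_l _ _ (sb1 k)] at h2
        rw [zpow_sub_one]
        simpa using h2
  -- h multiplicativity when the relevant star vanishes
  have hmul_r : ∀ x y z : DihedralGroup n, star x z = 1 →
      h x (y * z) = h x y * h x z := by
    intro x y z hs
    rw [h_right x y z, hs]
    simp [f1, f1', fsym y]
  have hmul_l : ∀ x y z : DihedralGroup n, star y z = 1 →
      h (x * y) z = h y z * h x z := by
    intro x y z hs
    rw [h_left x y z, hs]
    simp [f1, f1', fsym x]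
  have h11 : ∀ x : DihedralGroup n, h x 1 = 1 := fun x => (hnorm x).1
  have h11' : ∀ x : DihedralGroup n, h 1 x = 1 := fun x => (hnorm x).2.1
  -- h vanishes on pairs of rotations
  have hb_b : ∀ j : ℤ, h (Db n ^ j) (Db n) = 1 := by
    have hinv : h (Db n)⁻¹ (Db n) = 1 := by
      have h2 := hmul_l (Db n)⁻¹ (Db n) (Db n) (s_self (Db n))
      rw [inv_mul_cancel, h11', (hnorm (Db n)).2.2, one_mul] at h2
      exact h2.symm
    intro j
    induction j using Int.induction_on with
    | zero => simpa using h11' (Db n)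
    | succ j ih =>
        rw [zpow_add_one, hmul_l _ _ _ (s_self (Db n)), (hnorm (Db n)).2.2, one_mul, ih]
    | pred j ih =>
        rw [zpow_sub_one, hmul_l _ _ _ (s_inv_l _ _ (s_self (Db n))), hinv, one_mul, ih]
  have hbb : ∀ j k : ℤ, h (Db n ^ j) (Db n ^ k) = 1 := by
    intro j k
    have sb : star (Db n ^ j) (Db n) = 1 := by simpa using sbb j 1
    have hinv : h (Db n ^ j) (Db n)⁻¹ = 1 := by
      have h2 := hmul_r (Db n ^ j) (Db n)⁻¹ (Db n) sb
      rw [inv_mul_cancel, h11, hb_b j, mul_one] at h2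
      exact h2.symm
    induction k using Int.induction_on with
    | zero => simpa using h11 (Db n ^ j)
    | succ k ih => rw [zpow_add_one, hmul_r _ _ _ sb, ih, hb_b j, one_mul]
    | pred k ih =>
        rw [zpow_sub_one, hmul_r _ _ _ (s_inv_r _ _ sb), ih, hinv, one_mul]
  intro j k
  constructor
  · rw [hmul_r _ _ _ (sbb j k), hbb j k, mul_one]
  · rw [hmul_l _ _ _ (sbb k j), hbb k j, one_mul]
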